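/- arXiv:1402.0946 — 4 statements merged into one kernel-verified Lean document; each statement's English description precedes it below -/
import Mathlib

section
/- Let X be a complex Banach space and let s be a positive integer. If A ∈ B(X) is a bounded operator with A² = 0 and rank at least three, then there exists a bounded operator B ∈ B(X) of rank at most three such that the peripheral spectrum of A B^s + B^s A equals {1, e^{2πi/3}, e^{4πi/3}}, the set of cube roots of unity. -/
open scoped ENNReal

/-- The peripheral spectrum of a bounded operator: the set of spectral values of
maximal modulus. -/
noncomputable def pSpec {X : Type*} [NormedAddCommGroup X] [NormedSpace ℂ X]
    (T : X →L[ℂ] X) : Set ℂ :=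
  {z ∈ spectrum ℂ T | (‖z‖₊ : ℝ≥0∞) = spectralRadius ℂ T}

/-- The rank of a bounded operator: the dimension of its range. -/
noncomputable def opRank {X Y : Type*} [NormedAddCommGroup X] [NormedSpace ℂ X]
    [NormedAddCommGroup Y] [NormedSpace ℂ Y] (T : X →L[ℂ] Y) : Cardinal :=
  Module.rank ℂ (LinearMap.range (T : X →ₗ[ℂ] Y))

/-- A standard operator algebra on `X`: a subalgebra of `B(X)` containing all bounded
finite-rank operators. -/
def IsStandardOpAlg {X : Type*} [NormedAddCommGroup X] [NormedSpace ℂ X]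
    (𝒜 : Subalgebra ℂ (X →L[ℂ] X)) : Prop :=
  ∀ T : X →L[ℂ] X, opRank T < Cardinal.aleph0 → T ∈ 𝒜

/-- The set `I₁(X)` of rank-one idempotents, i.e. operators `x ⊗ f` with `f x = 1`. -/
def rankOneIdem (X : Type*) [NormedAddCommGroup X] [NormedSpace ℂ X] :
    Set (X →L[ℂ] X) :=
  {P | ∃ (f : X →L[ℂ] ℂ) (x : X), f x = 1 ∧ P = f.smulRight x}

/-- The Banach-space adjoint (dual) operator `A* : X* → X*`, `f ↦ f ∘ A`. -/
noncomputable def dualOp {X : Type*} [NormedAddCommGroup X] [NormedSpace ℂ X]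
    (A : X →L[ℂ] X) : StrongDual ℂ X →L[ℂ] StrongDual ℂ X :=
  (ContinuousLinearMap.compL ℂ X X ℂ).flip A

open Polynomial ContinuousLinearMap in
/-- Auxiliary lemma: the peripheral spectrum of the special finite-rank operator
`C = ∑ fᵢ ⊗ v_{i+1} + ∑ gᵢ ⊗ (u_{i+1} + vᵢ)` is the set of cube roots of unity. -/
lemma aux_pSpec_cube_roots {X : Type*} [NormedAddCommGroup X] [NormedSpace ℂ X]
    (u v : Fin 3 → X) (fl gl : Fin 3 → (X →L[ℂ] ℂ))
    (hv : LinearIndependent ℂ v)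
    (hfu : ∀ i j, fl i (u j) = 0)
    (hfv : ∀ i j, fl i (v j) = if i = j then 1 else 0)
    (hgu : ∀ i j, gl i (u j) = if i = j then 1 else 0)
    (hgv : ∀ i j, gl i (v j) = 0)
    (C : X →L[ℂ] X)
    (hC : C = (∑ i, (fl i).smulRight (v (i+1))) + ∑ i, (gl i).smulRight (u (i+1) + v i)) :
    pSpec C = {1, Complex.exp (2 * Real.pi * Complex.I / 3),
      Complex.exp (4 * Real.pi * Complex.I / 3)} := by
  classical
  have hCx : ∀ x, C x = (∑ i, fl i x • v (i+1)) + ∑ i, gl i x • (u (i+1) + v i) := by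
    intro x
    rw [hC]
    simp [ContinuousLinearMap.sum_apply, smulRight_apply]
  have hCu : ∀ j, C (u j) = u (j+1) + v j := by
    intro j
    rw [hCx]
    simp [hfu, hgu, ite_smul, smul_add, Finset.sum_add_distrib, Finset.sum_ite_eq,
      Finset.sum_ite_eq']
  have hCv : ∀ j, C (v j) = v (j+1) := by
    intro j
    rw [hCx]
    simp [hfv, hgv, ite_smul, smul_add, Finset.sum_add_distrib, Finset.sum_ite_eq,
      Finset.sum_ite_eq']
  have hidx1 : ∀ j : Fin 3, j + 1 + 1 + 1 = j := by decide
  have hidx2 : ∀ j : Fin 3, j + 1 + 2 = j := by decide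
  have hidx3 : ∀ j : Fin 3, j + 1 + 1 = j + 2 := by decide
  set N : X →L[ℂ] X := ∑ i, (gl i).smulRight (v i) with hN
  have hNx : ∀ x, N x = ∑ i, gl i x • v i := by
    intro x; simp [hN, ContinuousLinearMap.sum_apply, smulRight_apply]
  set T : X →L[ℂ] X := C * C * C with hT
  have hTu : ∀ j, T (u j) = u j + (3:ℂ) • v (j+2) := by
    intro j
    rw [hT]
    simp only [ContinuousLinearMap.mul_apply, hCu, hCv, map_add]
    rw [hidx1, hidx3]
    module
  have hTv : ∀ j, T (v j) = v j := by
    intro j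
    rw [hT]
    simp only [ContinuousLinearMap.mul_apply, hCv, hidx1]
  have hpow : C^4 = T * C := by
    rw [hT, pow_succ, pow_succ, pow_two]
  have h4 : C^4 = C + (3:ℂ) • N := by
    ext x
    rw [hpow, ContinuousLinearMap.mul_apply, hCx x, map_add, map_sum, map_sum]
    simp only [map_smul, map_add, hTu, hTv, hidx2]
    rw [ContinuousLinearMap.add_apply, hCx, ContinuousLinearMap.smul_apply, hNx,
      Finset.smul_sum]
    simp only [smul_add, Finset.sum_add_distrib, smul_smul, smul_comm (3:ℂ)]
    try abel
  have hTN : T * N = N := by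
    ext x
    rw [ContinuousLinearMap.mul_apply, hNx, map_sum]
    simp only [map_smul, hTv, hNx]
  have h7 : C^7 = C + (6:ℂ) • N := by
    have h74 : C^7 = T * C^4 := by
      rw [hT, show (7:ℕ) = 3 + 4 from rfl, pow_add, pow_succ, pow_two]
    rw [h74, h4, mul_add, mul_smul_comm, hTN, ← hpow, h4]
    module
  have hq : (aeval C (Polynomial.X^7 - Polynomial.C 2 * Polynomial.X^4 + Polynomial.X :
      Polynomial ℂ)) = 0 := by
    rw [map_add, map_sub, map_pow, map_mul, aeval_C, map_pow, aeval_X,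
      ← Algebra.smul_def, h7, h4]
    module
  haveI : Nontrivial X := ⟨v 0, 0, hv.ne_zero 0⟩
  haveI : Nontrivial (X →L[ℂ] X) :=
    ⟨1, 0, fun h => hv.ne_zero 0 (by simpa using DFunLike.congr_fun h (v 0))⟩
  have hsub : ∀ z ∈ spectrum ℂ C, z = 0 ∨ z ^ 3 = 1 := by
    intro z hz
    have hmem := spectrum.subset_polynomial_aeval C
      (Polynomial.X^7 - Polynomial.C 2 * Polynomial.X^4 + Polynomial.X : Polynomial ℂ)
      ⟨z, hz, rfl⟩
    rw [hq, spectrum.zero_eq] at hmem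
    have hz0 : z^7 - 2*z^4 + z = 0 := by simpa using hmem
    have hfac : z * (z^3-1)^2 = 0 := by linear_combination hz0
    rcases mul_eq_zero.mp hfac with h|h
    · exact Or.inl h
    · exact Or.inr (sub_eq_zero.mp ((pow_eq_zero_iff two_ne_zero).mp h))
  have hmem : ∀ μ : ℂ, μ ^ 3 = 1 → μ ∈ spectrum ℂ C := by
    intro μ hμ
    set w : X := v 0 + μ^2 • v 1 + μ • v 2 with hwdef
    have hw0 : w ≠ 0 := by
      intro h
      have h1 := Fintype.linearIndependent_iff.mp hv ![1, μ^2, μ] ?_ 0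
      · simpa using h1
      · rw [Fin.sum_univ_three]
        simpa [hwdef] using h
    have hCw : C w = μ • w := by
      rw [hwdef, map_add, map_add, map_smul, map_smul, hCv, hCv, hCv]
      rw [show (0:Fin 3)+1 = 1 from rfl, show (1:Fin 3)+1 = 2 from rfl,
        show (2:Fin 3)+1 = 0 from rfl]
      match_scalars
      all_goals first
        | ring1
        | linear_combination hμ
        | linear_combination -hμ
        | linear_combination 2 * hμ
        | linear_combination -2 * hμ
        | linear_combination μ * hμ
        | linear_combination -μ * hμ
    rw [spectrum.mem_iff]
    intro hunit
    obtain ⟨U, hU⟩ := hunit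
    apply hw0
    have hz : (algebraMap ℂ (X →L[ℂ] X) μ - C) w = 0 := by
      rw [Algebra.algebraMap_eq_smul_one]
      simp [ContinuousLinearMap.sub_apply, hCw]
    calc w = ((1 : X →L[ℂ] X)) w := rfl
      _ = ((↑U⁻¹ * ↑U : X →L[ℂ] X)) w := by rw [U.inv_mul]
      _ = (↑U⁻¹ : X →L[ℂ] X) ((↑U : X →L[ℂ] X) w) := rfl
      _ = 0 := by rw [hU, hz, map_zero]
  -- cube roots of unity facts
  set ω := Complex.exp (2 * Real.pi * Complex.I / 3) with hω
  have hω3 : ω ^ 3 = 1 := by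
    rw [hω, ← Complex.exp_nat_mul]
    rw [show (3:ℕ) * (2 * (Real.pi:ℂ) * Complex.I / 3) = 2 * Real.pi * Complex.I by
      push_cast; ring]
    exact Complex.exp_two_pi_mul_I
  have hωne : ω ≠ 1 := by
    intro h
    rw [hω, Complex.exp_eq_one_iff] at h
    obtain ⟨n, hn⟩ := h
    have hpi : (2 * (Real.pi:ℂ) * Complex.I) ≠ 0 := by
      simp [Real.pi_ne_zero, Complex.I_ne_zero]
    have h31 : (3 * n : ℂ) = 1 := by
      have h' : (1:ℂ) * (2 * (Real.pi:ℂ) * Complex.I)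
          = (3 * n) * (2 * (Real.pi:ℂ) * Complex.I) := by
        rw [one_mul]
        calc 2 * (Real.pi:ℂ) * Complex.I = 3 * (2 * (Real.pi:ℂ) * Complex.I / 3) := by ring
          _ = 3 * (n * (2 * Real.pi * Complex.I)) := by rw [hn]
          _ = (3 * n) * (2 * (Real.pi:ℂ) * Complex.I) := by ring
      exact (mul_right_cancel₀ hpi h').symm
    have : (3 * n : ℤ) = 1 := by exact_mod_cast h31
    omega
  have hω42 : Complex.exp (4 * Real.pi * Complex.I / 3) = ω ^ 2 := by
    rw [hω, ← Complex.exp_nat_mul]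
    congr 1
    push_cast; ring
  have hS : 1 + ω + ω ^ 2 = 0 := by
    have hfac : (ω - 1) * (ω ^ 2 + ω + 1) = 0 := by linear_combination hω3
    rcases mul_eq_zero.mp hfac with h | h
    · exact absurd (sub_eq_zero.mp h) hωne
    · linear_combination h
  have hroots : ∀ z : ℂ, z ^ 3 = 1 → z = 1 ∨ z = ω ∨ z = ω ^ 2 := by
    intro z hz
    have hfac : (z - 1) * ((z - ω) * (z - ω ^ 2)) = 0 := by
      linear_combination hz + (z - z ^ 2) * hS + (z - 1) * hω3
    rcases mul_eq_zero.mp hfac with h | h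
    · exact Or.inl (sub_eq_zero.mp h)
    · rcases mul_eq_zero.mp h with h | h
      · exact Or.inr (Or.inl (sub_eq_zero.mp h))
      · exact Or.inr (Or.inr (sub_eq_zero.mp h))
  have hnorm1 : ∀ z : ℂ, z ^ 3 = 1 → ‖z‖₊ = 1 := by
    intro z hz
    have hr : ‖z‖ ^ 3 = 1 := by
      rw [← norm_pow, hz, norm_one]
    have h1 : ‖z‖ = 1 := by
      nlinarith [norm_nonneg z, sq_nonneg (‖z‖ - 1), sq_nonneg (‖z‖ + 1)]
    ext
    simpa using h1
  have hrad : spectralRadius ℂ C = 1 := by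
    apply le_antisymm
    · rw [spectralRadius]
      apply iSup₂_le
      intro z hz
      rcases hsub z hz with rfl | h
      · simp
      · rw [hnorm1 z h]; simp
    · have h1 : (1:ℂ) ∈ spectrum ℂ C := hmem 1 (one_pow 3)
      calc (1:ℝ≥0∞) = (‖(1:ℂ)‖₊ : ℝ≥0∞) := by simp
        _ ≤ spectralRadius ℂ C :=
          le_iSup₂ (f := fun k (_ : k ∈ spectrum ℂ C) => (‖k‖₊ : ℝ≥0∞)) 1 h1
  ext z
  simp only [pSpec, Set.mem_setOf_eq, hrad, Set.mem_insert_iff, Set.mem_singleton_iff, hω42]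
  constructor
  · rintro ⟨hzs, hzn⟩
    rcases hsub z hzs with rfl | h3
    · simp at hzn
    · exact hroots z h3
  · rintro (rfl | rfl | rfl)
    · exact ⟨hmem 1 (one_pow 3), by simp⟩
    · refine ⟨hmem ω hω3, ?_⟩
      rw [hnorm1 ω hω3]; simp
    · refine ⟨hmem (ω ^ 2)
        (by rw [← pow_mul, show 2*3 = 3*2 from rfl, pow_mul, hω3, one_pow]), ?_⟩
      rw [hnorm1 (ω ^ 2) (by rw [← pow_mul, show 2*3 = 3*2 from rfl, pow_mul, hω3, one_pow])]
      simp

/-- for a positive integer `s` and a bounded operator `A` with `A² = 0`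
of rank at least three on a complex Banach space, there is a bounded operator `B` of
rank at most three such that the peripheral spectrum of `ABˢ + BˢA` is the set of cube
roots of unity `{1, e^{2πi/3}, e^{4πi/3}}`. -/
theorem exists_B_pSpec_cube_roots_of_sq_zero
    {X : Type*} [NormedAddCommGroup X] [NormedSpace ℂ X] [CompleteSpace X]
    (s : ℕ) (hs : 0 < s) (A : X →L[ℂ] X) (hA2 : A ^ 2 = 0) (hA : 3 ≤ opRank A) :
    ∃ B : X →L[ℂ] X, opRank B ≤ 3 ∧
      pSpec (A * B ^ s + B ^ s * A) =
        {1, Complex.exp (2 * Real.pi * Complex.I / 3),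
          Complex.exp (4 * Real.pi * Complex.I / 3)} := by
  classical
  have hA2' : ∀ x : X, A (A x) = 0 := fun x => by
    have h := DFunLike.congr_fun hA2 x
    simpa [pow_succ, ContinuousLinearMap.mul_apply] using h
  have h3 : ((3:ℕ) : Cardinal) ≤ LinearMap.rank (A : X →ₗ[ℂ] X) := by
    exact_mod_cast hA
  obtain ⟨t, htc, hti⟩ := LinearMap.le_rank_iff_exists_linearIndependent_finset.mp h3
  let e : Fin 3 ≃ (t : Set X) := (t.equivFin.trans (finCongr htc)).symm
  set u : Fin 3 → X := fun i => ((e i : (t : Set X)) : X) with hu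
  set v : Fin 3 → X := fun i => A (u i) with hvdef
  have hv : LinearIndependent ℂ v := by
    have := hti.comp e e.injective
    exact this
  set w : (Fin 3 ⊕ Fin 3) → X := Sum.elim u v with hwdef
  have hw : LinearIndependent ℂ w := by
    rw [Fintype.linearIndependent_iff]
    intro g hg
    have hv' := Fintype.linearIndependent_iff.mp hv
    rw [Fintype.sum_sum_type] at hg
    have hAg : ∑ i : Fin 3, g (Sum.inl i) • v i = 0 := by
      have := congrArg A hg
      simpa [map_add, map_sum, map_smul, hwdef, hvdef, hA2'] using this
    have h1 : ∀ i, g (Sum.inl i) = 0 := hv' _ hAg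
    have h2 : ∀ i, g (Sum.inr i) = 0 := by
      apply hv'
      have : ∑ i : Fin 3, g (Sum.inr i) • v i = 0 := by
        have := hg
        simp only [hwdef, Sum.elim_inl, Sum.elim_inr, h1, zero_smul,
          Finset.sum_const_zero, zero_add] at this
        exact this
      exact this
    rintro (i | i)
    · exact h1 i
    · exact h2 i
  set p : Submodule ℂ X := Submodule.span ℂ (Set.range w) with hp
  haveI : FiniteDimensional ℂ p := FiniteDimensional.span_of_finite ℂ (Set.finite_range w)
  let b : Module.Basis (Fin 3 ⊕ Fin 3) ℂ p := Module.Basis.span hw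
  have hex : ∀ i : Fin 3, ∃ F : X →L[ℂ] ℂ, ∀ y : p, F y = b.coord (Sum.inr i) y := by
    intro i
    obtain ⟨F, hF, -⟩ := exists_extension_norm_eq p
      (LinearMap.toContinuousLinearMap (b.coord (Sum.inr i)))
    exact ⟨F, fun y => by simpa using hF y⟩
  choose f hf using hex
  have hwp : ∀ j, w j ∈ p := fun j => Submodule.subset_span ⟨j, rfl⟩
  have hfw : ∀ i j, f i (w j) = if (Sum.inr i : Fin 3 ⊕ Fin 3) = j then 1 else 0 := by
    intro i j
    have hbj : (⟨w j, hwp j⟩ : p) = b j := by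
      apply Subtype.ext
      exact congrArg Subtype.val (Module.Basis.span_apply hw j).symm
    have := hf i ⟨w j, hwp j⟩
    rw [hbj] at this
    rw [show f i (w j) = f i ((b j : p) : X) by rw [← hbj]]
    rw [this]
    rw [Module.Basis.coord_apply, Module.Basis.repr_self]
    rw [Finsupp.single_apply]
    simp [eq_comm]
  have hfu : ∀ i j, f i (u j) = 0 := by
    intro i j
    have := hfw i (Sum.inl j)
    simpa [hwdef] using this
  have hfv : ∀ i j, f i (A (u j)) = if i = j then 1 else 0 := by
    intro i j
    have := hfw i (Sum.inr j)
    simpa [hwdef, hvdef] using this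
  -- build B
  set z : Fin 3 → X := fun i => u (i+1) + v i with hzdef
  set B : X →L[ℂ] X := ∑ i, (f i).smulRight (z i) with hB
  have hBx : ∀ x, B x = ∑ i, f i x • z i := by
    intro x; simp [hB, ContinuousLinearMap.sum_apply, ContinuousLinearMap.smulRight_apply]
  have hBu : ∀ j, B (u j) = 0 := by
    intro j; simp [hBx, hfu]
  have hBv : ∀ j, B (v j) = z j := by
    intro j
    rw [hBx]
    simp [hvdef, hfv, ite_smul, Finset.sum_ite_eq, Finset.sum_ite_eq']
  have hBz : ∀ i, B (z i) = z i := by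
    intro i
    rw [hzdef]
    simp only [map_add, hBu, hBv, zero_add]
    rfl
  have hBB : B * B = B := by
    ext x
    rw [ContinuousLinearMap.mul_apply, hBx x, map_sum]
    simp only [map_smul, hBz]
  have hBs : B ^ s = B := by
    obtain ⟨n, rfl⟩ := Nat.exists_eq_succ_of_ne_zero hs.ne'
    clear hs
    induction n with
    | zero => simp
    | succ n ih => rw [pow_succ, ih, hBB]
  have hrank : opRank B ≤ 3 := by
    have hsub : LinearMap.range (B : X →ₗ[ℂ] X) ≤ Submodule.span ℂ (Set.range z) := by
      rintro y ⟨x, rfl⟩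
      rw [ContinuousLinearMap.coe_coe, hBx]
      exact Submodule.sum_mem _ fun i _ =>
        Submodule.smul_mem _ _ (Submodule.subset_span ⟨i, rfl⟩)
    calc opRank B ≤ Module.rank ℂ (Submodule.span ℂ (Set.range z)) := Submodule.rank_mono hsub
      _ ≤ Cardinal.mk (Set.range z) := rank_span_le _
      _ ≤ 3 := by
          have h := Cardinal.mk_range_le_lift (f := z)
          rw [Cardinal.mk_fin] at h
          simpa using h
  have hCeq : A * B ^ s + B ^ s * A
      = (∑ i, ((f i).smulRight (v (i+1)))) +
        ∑ i, (((f i).comp A).smulRight (u (i+1) + v i)) := by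
    rw [hBs]
    ext x
    rw [ContinuousLinearMap.add_apply, ContinuousLinearMap.mul_apply,
      ContinuousLinearMap.mul_apply, hBx x, map_sum, hBx (A x)]
    simp only [map_smul, ContinuousLinearMap.add_apply, ContinuousLinearMap.sum_apply,
      ContinuousLinearMap.smulRight_apply, ContinuousLinearMap.comp_apply]
    congr 1
    refine Finset.sum_congr rfl fun i _ => ?_
    simp only [hzdef, hvdef]
    simp [map_add, hA2']
  refine ⟨B, hrank, ?_⟩
  rw [hCeq]
  refine aux_pSpec_cube_roots u v f (fun i => (f i).comp A) hv hfu
    (fun i j => by simpa [hvdef] using hfv i j)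
    (fun i j => by simpa [ContinuousLinearMap.comp_apply, hvdef] using hfv i j)
    (fun i j => by simp [ContinuousLinearMap.comp_apply, hvdef, hA2']) _ rfl
end

section
/- Let X be a complex Banach space, let x ∈ X, f ∈ X*, and let B ∈ B(X) be a bounded operator. If f(x) ≠ 0, f(Bx) = 0 and f(B²x) ≠ 0, then the peripheral spectrum of B(x⊗f) + (x⊗f)B equals {β, −β} for any complex number β with β² = f(B²x)·f(x). -/
open scoped ENNReal

/-- part of Lemma 2.4: if `f x ≠ 0`, `f (B x) = 0` and `f (B² x) ≠ 0`,
then the peripheral spectrum of `B (x⊗f) + (x⊗f) B` is `{β, -β}` for any `β` with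
`β² = f (B² x) · f x`. -/
theorem pSpec_rankOne_jordan_pair
    {X : Type*} [NormedAddCommGroup X] [NormedSpace ℂ X] [CompleteSpace X]
    (x : X) (f : X →L[ℂ] ℂ) (B : X →L[ℂ] X)
    (h1 : f x ≠ 0) (h2 : f (B x) = 0) (h3 : f (B (B x)) ≠ 0) :
    ∀ β : ℂ, β ^ 2 = f (B (B x)) * f x →
      pSpec (B * f.smulRight x + f.smulRight x * B) = {β, -β} := by
  intro β hβ
  set T := B * f.smulRight x + f.smulRight x * B with hT
  have hx0 : x ≠ 0 := fun h => h1 (by simp [h])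
  have hca : f (B (B x)) * f x ≠ 0 := mul_ne_zero h3 h1
  have hβ0 : β ≠ 0 := by
    intro h
    apply hca
    rw [← hβ, h]; ring
  haveI : Nontrivial X := ⟨x, 0, hx0⟩
  haveI : Nontrivial (X →L[ℂ] X) := ⟨1, 0, fun h => hx0 (by
    simpa using ContinuousLinearMap.ext_iff.mp h x)⟩
  have hTapp : ∀ y, T y = f y • B x + f (B y) • x := by
    intro y
    simp [hT, ContinuousLinearMap.mul_apply, map_smul]
  have hTx : T x = f x • B x := by rw [hTapp]; simp [h2]
  have hTBx : T (B x) = f (B (B x)) • x := by rw [hTapp]; simp [h2]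
  -- T³ = β² • T
  have hT3 : T * T * T = β ^ 2 • T := by
    ext y
    have e1 : T (T y) = (f y * f (B (B x))) • x + (f (B y) * f x) • B x := by
      rw [hTapp y, map_add, map_smul, map_smul, hTx, hTBx, smul_smul, smul_smul,
        add_comm]
    have e2 : T (T (T y)) = (f y * f (B (B x)) * f x) • B x
        + (f (B y) * f x * f (B (B x))) • x := by
      rw [e1, map_add, map_smul, map_smul, hTx, hTBx, smul_smul, smul_smul, add_comm]
    simp only [ContinuousLinearMap.mul_apply, ContinuousLinearMap.smul_apply]
    rw [e2, hTapp y, smul_add, smul_smul, smul_smul]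
    match_scalars <;>
      first
        | ring1
        | linear_combination (-(f y)) * hβ
        | linear_combination f y * hβ
        | linear_combination (-(f (B y))) * hβ
        | linear_combination f (B y) * hβ
  -- spectrum is contained in {0, β, -β}
  have hsub : spectrum ℂ T ⊆ {0, β, -β} := by
    intro z hz
    have hpow : T ^ 3 = T * T * T := by rw [pow_succ, pow_succ, pow_one]
    have h0 : Polynomial.aeval T
        (Polynomial.X ^ 3 - Polynomial.C (β ^ 2) * Polynomial.X) = 0 := by
      rw [map_sub, map_mul, map_pow, Polynomial.aeval_X, Polynomial.aeval_C, hpow, hT3,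
        Algebra.algebraMap_eq_smul_one, smul_mul_assoc, one_mul, sub_self]
    have hmem := spectrum.subset_polynomial_aeval T
      (Polynomial.X ^ 3 - Polynomial.C (β ^ 2) * Polynomial.X) ⟨z, hz, rfl⟩
    rw [h0, spectrum.zero_eq] at hmem
    have hz3 : z ^ 3 - β ^ 2 * z = 0 := by simpa using hmem
    have hfac : z * ((z - β) * (z + β)) = 0 := by linear_combination hz3
    rcases mul_eq_zero.mp hfac with h | h
    · exact Or.inl h
    · rcases mul_eq_zero.mp h with h | h
      · exact Or.inr (Or.inl (sub_eq_zero.mp h))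
      · exact Or.inr (Or.inr (eq_neg_of_add_eq_zero_left h))
  -- eigenvalues give spectrum membership
  have mem_spec : ∀ (z : ℂ) (v : X), v ≠ 0 → T v = z • v → z ∈ spectrum ℂ T := by
    intro z v hv hTv
    rw [spectrum.mem_iff]
    intro hu
    apply hv
    have hker : (algebraMap ℂ (X →L[ℂ] X) z - T) v = 0 := by
      simp [Algebra.algebraMap_eq_smul_one, hTv]
    have hone : ((↑hu.unit⁻¹ : X →L[ℂ] X) * ↑hu.unit) v = v := by
      rw [Units.inv_mul]; rfl
    rw [ContinuousLinearMap.mul_apply, IsUnit.unit_spec, hker, map_zero] at hone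
    exact hone.symm
  have eig : ∀ s : ℂ, s ^ 2 = f (B (B x)) * f x → s ∈ spectrum ℂ T := by
    intro s hs
    have hs0 : s ≠ 0 := by
      intro h
      apply hca
      rw [← hs, h]; ring
    apply mem_spec s (s • x + f x • B x)
    · intro h
      have hf : f (s • x + f x • B x) = 0 := by rw [h, map_zero]
      simp only [map_add, map_smul, h2, smul_eq_mul, mul_zero, add_zero] at hf
      exact (mul_ne_zero hs0 h1) hf
    · rw [map_add, map_smul, map_smul, hTx, hTBx, smul_smul, smul_smul, smul_add,
        smul_smul, smul_smul]
      match_scalars <;>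
        first
          | ring1
          | linear_combination hs
          | linear_combination -hs
  have hβσ : β ∈ spectrum ℂ T := eig β hβ
  have hnegβσ : -β ∈ spectrum ℂ T := eig (-β) (by rw [neg_pow]; simpa using hβ)
  -- spectral radius equals ‖β‖₊
  have hr : spectralRadius ℂ T = (‖β‖₊ : ℝ≥0∞) := by
    apply le_antisymm
    · apply iSup₂_le
      intro z hz
      rcases hsub hz with h | h | h
      · simp [h]
      · simp [h]
      · simp [Set.mem_singleton_iff.mp h]
    · exact le_iSup₂ (f := fun z (_ : z ∈ spectrum ℂ T) => (‖z‖₊ : ℝ≥0∞)) β hβσ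
  -- conclude
  ext z
  simp only [pSpec, Set.mem_setOf_eq, hr, Set.mem_insert_iff, Set.mem_singleton_iff]
  constructor
  · rintro ⟨hzσ, hzn⟩
    rcases hsub hzσ with h | h | h
    · exfalso
      rw [h] at hzn
      simp only [nnnorm_zero, ENNReal.coe_zero] at hzn
      exact hβ0 (by simpa using hzn.symm)
    · exact Or.inl h
    · exact Or.inr h
  · rintro (rfl | rfl)
    · exact ⟨hβσ, rfl⟩
    · exact ⟨hnegβσ, by rw [nnnorm_neg]⟩
end

section
/- Let X be a complex Banach space and let A, A' ∈ B(X) be bounded operators. Suppose that for every x ∈ X and f ∈ X* with f(x) = 1, one has f(Ax) = 0 if and only if f(A'x) = 0. Then A' = λA for some scalar λ ∈ ℂ. -/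
open scoped ENNReal

lemma exists_dual_family {X : Type*} [NormedAddCommGroup X] [NormedSpace ℂ X]
    {n : ℕ} {v : Fin n → X} (hv : LinearIndependent ℂ v) (c : Fin n → ℂ) :
    ∃ f : X →L[ℂ] ℂ, ∀ i, f (v i) = c i := by
  set p : Submodule ℂ X := Submodule.span ℂ (Set.range v) with hp
  haveI : FiniteDimensional ℂ p := FiniteDimensional.span_of_finite ℂ (Set.finite_range v)
  let b : Module.Basis (Fin n) ℂ p := Module.Basis.span hv
  let g : p →ₗ[ℂ] ℂ := b.constr ℂ c
  let g' : p →L[ℂ] ℂ := ⟨g, g.continuous_of_finiteDimensional⟩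
  obtain ⟨f, hf, -⟩ := exists_extension_norm_eq p g'
  refine ⟨f, fun i => ?_⟩
  have hv' : v i ∈ p := Submodule.subset_span ⟨i, rfl⟩
  have h1 : f (v i) = g' ⟨v i, hv'⟩ := hf ⟨v i, hv'⟩
  rw [h1]
  show g ⟨v i, hv'⟩ = c i
  have h2 : (⟨v i, hv'⟩ : p) = b i := (Module.Basis.span_apply hv i).symm
  rw [h2, Module.Basis.constr_basis]

/-- Lemma 3.2: if for all `x ∈ X` and `f ∈ X*` with `f x = 1` one has
`f (A x) = 0 ↔ f (A' x) = 0`, then `A' = λ A` for some scalar `λ`. -/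
theorem eq_smul_of_orthogonality_equiv
    {X : Type*} [NormedAddCommGroup X] [NormedSpace ℂ X] [CompleteSpace X]
    (A A' : X →L[ℂ] X)
    (h : ∀ (x : X) (f : X →L[ℂ] ℂ), f x = 1 → (f (A x) = 0 ↔ f (A' x) = 0)) :
    ∃ lam : ℂ, A' = lam • A := by
  have key : ∀ x : X, ∃ c : ℂ, A' x = c • A x := by
    intro x
    by_cases hx : x = 0
    · exact ⟨0, by simp [hx]⟩
    by_contra hcon
    push_neg at hcon
    by_cases hAx : A x = 0
    · have hA'x : A' x ≠ 0 := fun h0 => hcon 0 (by rw [h0, zero_smul])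
      by_cases hind : LinearIndependent ℂ ![x, A' x]
      · obtain ⟨f, hf⟩ := exists_dual_family hind ![1, 1]
        have hfx : f x = 1 := by simpa using hf 0
        have h0 := (h x f hfx).1 (by simp [hAx])
        have h1 : f (A' x) = 1 := by simpa using hf 1
        rw [h0] at h1; exact zero_ne_one h1
      · rw [LinearIndependent.pair_iff' hx] at hind
        push_neg at hind
        obtain ⟨a, ha⟩ := hind
        obtain ⟨f, hf1⟩ := SeparatingDual.exists_eq_one (R := ℂ) hx
        have h0 := (h x f hf1).1 (by simp [hAx])
        rw [← ha, map_smul, hf1, smul_eq_mul, mul_one] at h0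
        exact hA'x (by rw [← ha, h0, zero_smul])
    · have hind : LinearIndependent ℂ ![A x, A' x] := by
        rw [LinearIndependent.pair_iff' hAx]
        intro a ha; exact hcon a ha.symm
      by_cases hxs : x ∈ Submodule.span ℂ (Set.range ![A x, A' x])
      · have hxs' : x ∈ Submodule.span ℂ ({A' x, A x} : Set X) := by
          simpa [Matrix.range_cons, Matrix.range_empty] using hxs
        obtain ⟨b, a, hab⟩ := Submodule.mem_span_pair.1 hxs'
        by_cases hb : b = 0
        · have hx' : x = a • A x := by
            conv_lhs => rw [← hab]
            rw [hb, zero_smul, zero_add]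
          have ha0 : a ≠ 0 := by
            rintro rfl; rw [zero_smul] at hx'; exact hx hx'
          have hind2 : LinearIndependent ℂ ![x, A' x] := by
            rw [LinearIndependent.pair_iff' hx]
            intro t ht
            apply hcon (t * a)
            rw [← ht]
            conv_lhs => rw [hx']
            rw [smul_smul]
          obtain ⟨f, hf⟩ := exists_dual_family hind2 ![1, 0]
          have hfx : f x = 1 := by simpa using hf 0
          have hfA' : f (A' x) = 0 := by simpa using hf 1
          have hfA := (h x f hfx).2 hfA'
          have hthis : f x = a * f (A x) := by
            conv_lhs => rw [hx']
            rw [map_smul, smul_eq_mul]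
          rw [hfx, hfA, mul_zero] at hthis
          exact one_ne_zero hthis
        · obtain ⟨f, hf⟩ := exists_dual_family hind ![0, b⁻¹]
          have hfA : f (A x) = 0 := by simpa using hf 0
          have hfA' : f (A' x) = b⁻¹ := by simpa using hf 1
          have hfx : f x = 1 := by
            rw [← hab, map_add, map_smul, map_smul, hfA, hfA', smul_eq_mul, smul_eq_mul,
              mul_zero, add_zero, mul_inv_cancel₀ hb]
          have := (h x f hfx).1 hfA
          rw [hfA'] at this
          exact hb (inv_eq_zero.1 this)
      · have hind3 : LinearIndependent ℂ ![x, A x, A' x] := by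
          rw [show (![x, A x, A' x]) = Fin.cons x ![A x, A' x] from rfl,
            linearIndependent_fin_cons]
          exact ⟨hind, hxs⟩
        obtain ⟨f, hf⟩ := exists_dual_family hind3 ![1, 0, 1]
        have hfx : f x = 1 := by simpa using hf 0
        have hfA : f (A x) = 0 := by simpa using hf 1
        have hfA' : f (A' x) = 1 := by simpa using hf 2
        have := (h x f hfx).1 hfA
        rw [hfA'] at this
        exact one_ne_zero this
  by_cases hA : A = 0
  · refine ⟨0, ?_⟩
    ext y
    obtain ⟨c, hc⟩ := key y
    simp [hc, hA]
  · obtain ⟨x₀, hx₀⟩ : ∃ x₀, A x₀ ≠ 0 := by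
      by_contra hX; push_neg at hX
      exact hA (ContinuousLinearMap.ext fun y => by simp [hX y])
    obtain ⟨lam, hlam⟩ := key x₀
    refine ⟨lam, ?_⟩
    ext y
    show A' y = lam • A y
    obtain ⟨μ, hμ⟩ := key y
    by_cases hdep : ∃ a : ℂ, A y = a • A x₀
    · obtain ⟨a, ha⟩ := hdep
      have h0 : A (y - a • x₀) = 0 := by
        rw [map_sub, map_smul, ha, sub_self]
      obtain ⟨c, hc⟩ := key (y - a • x₀)
      rw [h0, smul_zero, map_sub, map_smul, sub_eq_zero] at hc
      rw [hc, hlam, ha, smul_smul, smul_smul, mul_comm]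
    · have hind : LinearIndependent ℂ ![A x₀, A y] := by
        rw [LinearIndependent.pair_iff' hx₀]
        intro a ha; exact hdep ⟨a, ha.symm⟩
      obtain ⟨c, hc⟩ := key (x₀ + y)
      rw [map_add, map_add, hlam, hμ, smul_add] at hc
      have heq : (lam - c) • A x₀ + (μ - c) • A y = 0 := by
        rw [sub_smul, sub_smul]
        rw [← sub_eq_zero] at hc
        linear_combination (norm := module) hc
      obtain ⟨h1, h2⟩ := LinearIndependent.pair_iff.1 hind _ _ heq
      have : μ = lam := by
        have e1 : lam = c := sub_eq_zero.1 h1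
        have e2 : μ = c := sub_eq_zero.1 h2
        rw [e1, e2]
      rw [hμ, this]
end

section
/- Let X be a complex Banach space and let r and s be nonnegative integers with (r,s) ≠ (0,0). If A, A' ∈ B(X) satisfy σ_π(B^r A B^s + B^s A B^r) = σ_π(B^r A' B^s + B^s A' B^r) for every rank-one idempotent B ∈ I₁(X), then A = A'. -/
open scoped ENNReal

set_option linter.unusedSectionVars false

section Aux

open ContinuousLinearMap Polynomial

variable {E : Type*} [NormedAddCommGroup E] [NormedSpace ℂ E] [CompleteSpace E]

/-! ### Generalities -/

lemma aux_mem_spectrum_of_eigen {T : E →L[ℂ] E} {z : ℂ} {v : E} (hv : v ≠ 0)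
    (h : T v = z • v) : z ∈ spectrum ℂ T := by
  rw [spectrum.mem_iff]
  rintro ⟨u, hu⟩
  have h0 : (↑u : E →L[ℂ] E) v = 0 := by
    rw [hu]
    simp [Algebra.algebraMap_eq_smul_one, ContinuousLinearMap.sub_apply, h]
  have h1 := congrArg (fun S : E →L[ℂ] E => S v) u.inv_mul
  simp only [ContinuousLinearMap.mul_apply, h0, map_zero, ContinuousLinearMap.one_apply] at h1
  exact hv h1.symm

lemma aux_exists_dual_pair {x y : E} (h : LinearIndependent ℂ ![x, y]) :
    ∃ φ ψ : E →L[ℂ] ℂ, φ x = 1 ∧ φ y = 0 ∧ ψ x = 0 ∧ ψ y = 1 := by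
  obtain ⟨hy0, hxy⟩ := linearIndependent_fin2.mp h
  simp only [Matrix.cons_val_one, Matrix.head_cons, Matrix.cons_val_zero] at hy0 hxy
  have hx0 : x ≠ 0 := by
    have := h.ne_zero 0
    simpa using this
  obtain ⟨f, hf⟩ := SeparatingDual.exists_eq_one (R := ℂ) hx0
  have hy' : y - f y • x ≠ 0 := by
    intro h0
    have hyy : y = f y • x := by rwa [sub_eq_zero] at h0
    have hfy : f y ≠ 0 := by
      rintro hfy0
      rw [hfy0, zero_smul] at hyy
      exact hy0 hyy
    refine hxy (f y)⁻¹ ?_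
    calc (f y)⁻¹ • y = (f y)⁻¹ • (f y • x) := by rw [← hyy]
      _ = x := by rw [smul_smul, inv_mul_cancel₀ hfy, one_smul]
  obtain ⟨g, hg⟩ := SeparatingDual.exists_eq_one (R := ℂ) hy'
  have hgy : g y - f y * g x = 1 := by
    simpa [map_sub, map_smul, smul_eq_mul, mul_comm] using hg
  refine ⟨f - f y • (g - g x • f), g - g x • f, ?_, ?_, ?_, ?_⟩
  · simp only [ContinuousLinearMap.sub_apply, ContinuousLinearMap.smul_apply, smul_eq_mul, hf]
    ring
  · simp only [ContinuousLinearMap.sub_apply, ContinuousLinearMap.smul_apply, smul_eq_mul, hf]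
    linear_combination (-(f y)) * hgy
  · simp only [ContinuousLinearMap.sub_apply, ContinuousLinearMap.smul_apply, smul_eq_mul, hf]
    ring
  · simp only [ContinuousLinearMap.sub_apply, ContinuousLinearMap.smul_apply, smul_eq_mul, hf]
    linear_combination hgy

lemma aux_exists_scalar {D : E →L[ℂ] E} (h : ∀ x : E, ∃ c : ℂ, D x = c • x) {x₀ : E}
    (hx₀ : x₀ ≠ 0) : ∃ l : ℂ, ∀ y, D y = l • y := by
  obtain ⟨l, hl⟩ := h x₀
  refine ⟨l, fun y => ?_⟩
  rcases eq_or_ne y 0 with rfl | hy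
  · simp
  obtain ⟨c, hc⟩ := h y
  rw [hc]
  suffices hcl : c = l by rw [hcl]
  by_cases hind : LinearIndependent ℂ ![x₀, y]
  · obtain ⟨e, he⟩ := h (x₀ + y)
    rw [map_add, hl, hc] at he
    have h2 : (l - e) • x₀ + (c - e) • y = 0 := by
      rw [sub_smul, sub_smul]
      rw [eq_comm] at he
      linear_combination (norm := module) -he
    have h3 := Fintype.linearIndependent_iff.mp hind ![l - e, c - e] ?_
    · have h4 := h3 0
      have h5 := h3 1
      simp only [Matrix.cons_val_zero, Matrix.cons_val_one, Matrix.head_cons] at h4 h5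
      rw [sub_eq_zero] at h4 h5
      rw [h4, h5]
    · rw [Fin.sum_univ_two]
      simpa using h2
  · rw [linearIndependent_fin2] at hind
    push_neg at hind
    simp only [Matrix.cons_val_one, Matrix.head_cons, Matrix.cons_val_zero] at hind
    obtain ⟨a, haa⟩ := hind hy
    have hDx : D x₀ = c • x₀ := by
      calc D x₀ = D (a • y) := by rw [haa]
        _ = (a * c) • y := by rw [map_smul, hc, smul_smul]
        _ = c • (a • y) := by rw [smul_smul, mul_comm]
        _ = c • x₀ := by rw [haa]
    rw [hl] at hDx
    have h0 : (l - c) • x₀ = 0 := by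
      rw [sub_smul, hDx, sub_self]
    rcases smul_eq_zero.mp h0 with h0 | h0
    · exact (sub_eq_zero.mp h0).symm
    · exact absurd h0 hx₀

lemma aux_dep_scalar {y v : E} (h : ¬LinearIndependent ℂ ![y, v]) (hy : y ≠ 0) :
    ∃ p : ℂ, v = p • y := by
  rw [linearIndependent_fin2] at h
  push_neg at h
  simp only [Matrix.cons_val_one, Matrix.head_cons, Matrix.cons_val_zero] at h
  rcases eq_or_ne v 0 with rfl | hv
  · exact ⟨0, by simp⟩
  obtain ⟨a, haa⟩ := h hv
  have ha0 : a ≠ 0 := by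
    rintro rfl
    rw [zero_smul] at haa
    exact hy haa.symm
  refine ⟨a⁻¹, ?_⟩
  rw [← haa, smul_smul, inv_mul_cancel₀ ha0, one_smul]

/-! ### Rank-one idempotents -/

lemma aux_idem {φ : E →L[ℂ] ℂ} {x : E} (hφ : φ x = 1) :
    φ.smulRight x * φ.smulRight x = φ.smulRight x := by
  ext y
  simp [ContinuousLinearMap.mul_apply, hφ, smul_smul, mul_comm]

lemma aux_pow_idem {φ : E →L[ℂ] ℂ} {x : E} (hφ : φ x = 1) {n : ℕ} (hn : n ≠ 0) :
    (φ.smulRight x) ^ n = φ.smulRight x := by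
  induction n with
  | zero => exact absurd rfl hn
  | succ m ih =>
    rcases eq_or_ne m 0 with rfl | hm
    · rw [pow_one]
    · rw [pow_succ, ih hm, aux_idem hφ]

lemma aux_spec_smul_idem [Nontrivial E] {φ : E →L[ℂ] ℂ} {x : E} (hφ : φ x = 1) (c : ℂ)
    {z : ℂ} (hz : z ∈ spectrum ℂ (c • φ.smulRight x)) : z = 0 ∨ z = c := by
  have hnt : Nontrivial (E →L[ℂ] E) := by
    refine ⟨1, 0, fun h => ?_⟩
    have hx : x ≠ 0 := fun h0 => by simp [h0] at hφ
    exact hx (by simpa using DFunLike.congr_fun h x)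
  set T := c • φ.smulRight x with hT
  have hsq : T * T = c • T := by
    rw [hT, smul_mul_assoc, mul_smul_comm, aux_idem hφ, smul_smul]
  have h0 : Polynomial.aeval T (X ^ 2 - C c * X : ℂ[X]) = 0 := by
    simp only [map_sub, map_mul, Polynomial.aeval_X_pow, Polynomial.aeval_C,
      Polynomial.aeval_X, Algebra.algebraMap_eq_smul_one, smul_mul_assoc, one_mul, pow_two,
      hsq, sub_self]
  have himg := spectrum.subset_polynomial_aeval T (X ^ 2 - C c * X : ℂ[X]) ⟨z, hz, rfl⟩
  rw [h0, spectrum.zero_eq] at himg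
  simp only [Set.mem_singleton_iff, Polynomial.eval_sub, Polynomial.eval_mul,
    Polynomial.eval_pow, Polynomial.eval_X, Polynomial.eval_C] at himg
  have : z * (z - c) = 0 := by linear_combination himg
  rcases mul_eq_zero.mp this with h | h
  · exact Or.inl h
  · exact Or.inr (sub_eq_zero.mp h)

lemma aux_mem_pSpec_smul_idem [Nontrivial E] {φ : E →L[ℂ] ℂ} {x : E} (hφ : φ x = 1) (c : ℂ) :
    c ∈ pSpec (c • φ.smulRight x) := by
  have hx : x ≠ 0 := fun h0 => by simp [h0] at hφ
  set T := c • φ.smulRight x with hT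
  have hcσ : c ∈ spectrum ℂ T := by
    apply aux_mem_spectrum_of_eigen hx
    simp [hT, ContinuousLinearMap.smul_apply, hφ]
  have hge : (‖c‖₊ : ℝ≥0∞) ≤ spectralRadius ℂ T :=
    le_iSup₂ (f := fun k (_ : k ∈ spectrum ℂ T) => (‖k‖₊ : ℝ≥0∞)) c hcσ
  have hle : spectralRadius ℂ T ≤ (‖c‖₊ : ℝ≥0∞) := by
    apply iSup₂_le
    intro z hz
    rcases aux_spec_smul_idem hφ c hz with rfl | rfl
    · simp
    · exact le_rfl
  exact ⟨hcσ, le_antisymm hge hle⟩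

lemma aux_pSpec_smul_idem_inj [Nontrivial E] {φ : E →L[ℂ] ℂ} {x : E} (hφ : φ x = 1)
    {c c' : ℂ} (hp : pSpec (c • φ.smulRight x) = pSpec (c' • φ.smulRight x)) : c = c' := by
  have h1 := (hp ▸ aux_mem_pSpec_smul_idem hφ c).1
  have h2 := (hp.symm ▸ aux_mem_pSpec_smul_idem hφ c').1
  rcases aux_spec_smul_idem hφ c' h1 with rfl | h
  · rcases aux_spec_smul_idem hφ 0 h2 with rfl | h
    · rfl
    · exact h.symm
  · exact h

/-! ### The cubic identity for `B A + A B` and its spectral consequences -/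

lemma aux_cubic_rel (A : E →L[ℂ] E) {φ : E →L[ℂ] ℂ} {x : E} (hφ : φ x = 1) :
    (φ.smulRight x * A + A * φ.smulRight x) * (φ.smulRight x * A + A * φ.smulRight x) *
      (φ.smulRight x * A + A * φ.smulRight x) =
    (2 * φ (A x)) • ((φ.smulRight x * A + A * φ.smulRight x) *
      (φ.smulRight x * A + A * φ.smulRight x)) +
    (φ (A (A x)) - φ (A x) ^ 2) • (φ.smulRight x * A + A * φ.smulRight x) := by
  ext y
  simp only [ContinuousLinearMap.add_apply, ContinuousLinearMap.mul_apply,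
    ContinuousLinearMap.smul_apply, ContinuousLinearMap.smulRight_apply, map_add, map_smul,
    map_smulₛₗ, RingHom.id_apply, smul_eq_mul, hφ]
  module

lemma aux_cubic_spec [Nontrivial E] (A : E →L[ℂ] E) {φ : E →L[ℂ] ℂ} {x : E} (hφ : φ x = 1)
    {z : ℂ} (hz : z ∈ spectrum ℂ (φ.smulRight x * A + A * φ.smulRight x)) :
    z * ((z - φ (A x)) ^ 2 - φ (A (A x))) = 0 := by
  set T := φ.smulRight x * A + A * φ.smulRight x with hT
  set a := φ (A x) with ha
  set b := φ (A (A x)) with hb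
  have hnt : Nontrivial (E →L[ℂ] E) := by
    refine ⟨1, 0, fun h => ?_⟩
    have hx : x ≠ 0 := fun h0 => by simp [h0] at hφ
    exact hx (by simpa using DFunLike.congr_fun h x)
  have h0 : Polynomial.aeval T
      (X ^ 3 - C (2 * a) * X ^ 2 - C (b - a ^ 2) * X : ℂ[X]) = 0 := by
    simp only [map_sub, map_mul, Polynomial.aeval_X_pow, Polynomial.aeval_C,
      Polynomial.aeval_X, Algebra.algebraMap_eq_smul_one, smul_mul_assoc, one_mul]
    have h3 : T ^ 3 = T * T * T := by rw [pow_succ, pow_two]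
    have h2 : T ^ 2 = T * T := by rw [pow_two]
    rw [h3, h2, aux_cubic_rel A hφ, ← hT, ← ha, ← hb]
    simp only [sub_mul, smul_mul_assoc, one_mul]
    module
  have himg := spectrum.subset_polynomial_aeval T
    (X ^ 3 - C (2 * a) * X ^ 2 - C (b - a ^ 2) * X : ℂ[X]) ⟨z, hz, rfl⟩
  rw [h0, spectrum.zero_eq] at himg
  simp only [Set.mem_singleton_iff, Polynomial.eval_sub, Polynomial.eval_mul,
    Polynomial.eval_pow, Polynomial.eval_X, Polynomial.eval_C] at himg
  linear_combination himg

lemma aux_root_mem_spec (A : E →L[ℂ] E) {φ : E →L[ℂ] ℂ} {x : E} (hφ : φ x = 1)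
    (hind : LinearIndependent ℂ ![x, A x]) {w : ℂ} (hw : w ^ 2 = φ (A (A x))) :
    φ (A x) + w ∈ spectrum ℂ (φ.smulRight x * A + A * φ.smulRight x) := by
  obtain ⟨hAx, hax⟩ := linearIndependent_fin2.mp hind
  simp only [Matrix.cons_val_one, Matrix.head_cons, Matrix.cons_val_zero] at hAx hax
  apply aux_mem_spectrum_of_eigen (v := w • x + A x)
  · intro h0
    have hAxe : A x = (-w) • x := by
      rw [neg_smul, eq_neg_iff_add_eq_zero, add_comm]
      exact h0
    have hw0 : w ≠ 0 := by
      rintro rfl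
      rw [hAxe] at hAx
      simp at hAx
    refine hax (-w)⁻¹ ?_
    rw [hAxe, smul_smul]
    field_simp
    simp
  · simp only [ContinuousLinearMap.add_apply, ContinuousLinearMap.mul_apply,
      ContinuousLinearMap.smulRight_apply, map_add, map_smul, smul_eq_mul, hφ]
    rw [← hw]
    module

lemma aux_key_eqs [Nontrivial E] (A A' : E →L[ℂ] E) {φ : E →L[ℂ] ℂ} {x : E} (hφ : φ x = 1)
    (hper : pSpec (φ.smulRight x * A + A * φ.smulRight x) =
      pSpec (φ.smulRight x * A' + A' * φ.smulRight x))
    (hind : LinearIndependent ℂ ![x, A x]) (ha : φ (A x) ≠ 0) :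
    ∃ z : ℂ, z ≠ 0 ∧ (z - φ (A x)) ^ 2 = φ (A (A x)) ∧
      (z - φ (A' x)) ^ 2 = φ (A' (A' x)) := by
  set T := φ.smulRight x * A + A * φ.smulRight x with hT
  set T' := φ.smulRight x * A' + A' * φ.smulRight x with hT'
  have hnt : Nontrivial (E →L[ℂ] E) := by
    refine ⟨1, 0, fun h => ?_⟩
    have hx : x ≠ 0 := fun h0 => by simp [h0] at hφ
    exact hx (by simpa using DFunLike.congr_fun h x)
  obtain ⟨z, hzσ, hzr⟩ := spectrum.exists_nnnorm_eq_spectralRadius (a := T)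
  have hle : ∀ u ∈ spectrum ℂ T, (‖u‖₊ : ℝ≥0∞) ≤ spectralRadius ℂ T := fun u hu =>
    le_iSup₂ (f := fun k (_ : k ∈ spectrum ℂ T) => (‖k‖₊ : ℝ≥0∞)) u hu
  obtain ⟨w, hw⟩ := IsAlgClosed.exists_pow_nat_eq (φ (A (A x))) (two_pos)
  have hw' : (-w) ^ 2 = φ (A (A x)) := by rw [neg_pow]; simpa using hw
  have h1 := aux_root_mem_spec A hφ hind hw
  have h2 := aux_root_mem_spec A hφ hind hw'
  have hb1 : ‖φ (A x) + w‖ ≤ ‖z‖ := by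
    have := (hzr ▸ hle _ h1)
    exact_mod_cast this
  have hb2 : ‖φ (A x) + -w‖ ≤ ‖z‖ := by
    have := (hzr ▸ hle _ h2)
    exact_mod_cast this
  have hza : ‖φ (A x)‖ ≤ ‖z‖ := by
    have h3 : (2 : ℝ) * ‖φ (A x)‖ = ‖(φ (A x) + w) + (φ (A x) + -w)‖ := by
      rw [show (φ (A x) + w) + (φ (A x) + -w) = 2 * φ (A x) by ring]
      simp [norm_mul]
    nlinarith [norm_add_le (φ (A x) + w) (φ (A x) + -w)]
  have hz0 : z ≠ 0 := by
    intro h0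
    rw [h0, norm_zero] at hza
    exact ha (norm_le_zero_iff.mp hza)
  have hzp : z ∈ pSpec T := ⟨hzσ, hzr⟩
  have hzσ' : z ∈ spectrum ℂ T' := (hper ▸ hzp).1
  have e1 := aux_cubic_spec A hφ hzσ
  have e2 := aux_cubic_spec A' hφ hzσ'
  refine ⟨z, hz0, ?_, ?_⟩
  · rcases mul_eq_zero.mp e1 with h | h
    · exact absurd h hz0
    · linear_combination h
  · rcases mul_eq_zero.mp e2 with h | h
    · exact absurd h hz0
    · linear_combination h

/-! ### Algebraic steps -/

lemma aux_alg_step {z a b a' b' : ℂ} (e1 : (z - a) ^ 2 = b) (e2 : (z - a') ^ 2 = b') :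
    ((a - a') ^ 2 + (b - b')) ^ 2 = 4 * b * (a - a') ^ 2 := by
  have h3 : (a - a') ^ 2 + (b - b') = -2 * (a - a') * (z - a) := by
    linear_combination e2 - e1
  calc ((a - a') ^ 2 + (b - b')) ^ 2 = 4 * (a - a') ^ 2 * (z - a) ^ 2 := by rw [h3]; ring
    _ = 4 * b * (a - a') ^ 2 := by rw [e1]; ring

lemma aux_poly_key {c e₀ e₁ b₀ β α : ℂ}
    (H : ∀ t : ℂ, 1 + t * α ≠ 0 →
      ((c + t) ^ 2 + (e₀ + t * e₁)) ^ 2 = 4 * (b₀ + t * β) * (c + t) ^ 2) : False := by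
  set P : ℂ[X] := X ^ 4 + C (4*c + 2*e₁ - 4*β) * X ^ 3 +
    C ((2*c+e₁)^2 + 2*(c^2+e₀) - 8*β*c - 4*b₀) * X ^ 2 +
    C (2*(2*c+e₁)*(c^2+e₀) - 4*β*c^2 - 8*b₀*c) * X +
    C ((c^2+e₀)^2 - 4*b₀*c^2) with hP
  have hfin : ({t : ℂ | 1 + t * α = 0}).Finite := by
    by_cases hα : α = 0
    · convert Set.finite_empty
      ext t
      simp [hα]
    · apply Set.Finite.subset (Set.finite_singleton (-1 / α))
      intro t ht
      simp only [Set.mem_setOf_eq] at ht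
      simp only [Set.mem_singleton_iff]
      field_simp
      linear_combination ht
  have hroots : {t : ℂ | P.IsRoot t}.Infinite := by
    apply Set.Infinite.mono _ hfin.infinite_compl
    intro t ht
    simp only [Set.mem_compl_iff, Set.mem_setOf_eq] at ht
    have := H t ht
    simp only [Set.mem_setOf_eq, Polynomial.IsRoot, hP, Polynomial.eval_add,
      Polynomial.eval_mul, Polynomial.eval_pow, Polynomial.eval_X, Polynomial.eval_C]
    linear_combination this
  have hP0 : P = 0 := Polynomial.eq_zero_of_infinite_isRoot P hroots
  have hc : P.coeff 4 = 1 := by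
    rw [hP]
    simp only [Polynomial.coeff_add, Polynomial.coeff_C_mul, Polynomial.coeff_X_pow,
      Polynomial.coeff_C, Polynomial.coeff_X]
    norm_num
  rw [hP0] at hc
  simp at hc

/-! ### The two main structural lemmas for the mixed case -/

lemma aux_claimA [Nontrivial E] (A A' : E →L[ℂ] E)
    (hmix : ∀ (φ : E →L[ℂ] ℂ) (x : E), φ x = 1 →
      pSpec (φ.smulRight x * A + A * φ.smulRight x) =
        pSpec (φ.smulRight x * A' + A' * φ.smulRight x))
    (x : E) (hind : LinearIndependent ℂ ![x, A x]) :
    A x - A' x ∈ Submodule.span ℂ {x} := by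
  by_contra hspan
  have hx0 : x ≠ 0 := by simpa using hind.ne_zero 0
  have hD0 : A x - A' x ≠ 0 := fun h => hspan (h ▸ Submodule.zero_mem _)
  have hindD : LinearIndependent ℂ ![x, A x - A' x] := by
    rw [linearIndependent_fin2]
    constructor
    · simpa using hD0
    · intro a ha
      simp only [Matrix.cons_val_one, Matrix.head_cons, Matrix.cons_val_zero] at ha
      have ha0 : a ≠ 0 := by
        rintro rfl
        rw [zero_smul] at ha
        exact hx0 ha.symm
      have h5 : a⁻¹ • (a • (A x - A' x)) = A x - A' x := by
        rw [smul_smul, inv_mul_cancel₀ ha0, one_smul]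
      rw [ha] at h5
      exact hspan (Submodule.mem_span_singleton.mpr ⟨a⁻¹, h5⟩)
  obtain ⟨φ1, ψ, hφ1x, hφ1v, hψx, hψv⟩ := aux_exists_dual_pair hindD
  obtain ⟨φ2, ψA, hφ2x, hφ2A, hψAx, hψAA⟩ := aux_exists_dual_pair hind
  set φ₀ := φ2 + ψA with hφ₀
  have hφ₀x : φ₀ x = 1 := by simp [hφ₀, hφ2x, hψAx]
  have hφ₀A : φ₀ (A x) = 1 := by simp [hφ₀, hφ2A, hψAA]
  refine aux_poly_key (c := φ₀ (A x) - φ₀ (A' x))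
    (e₀ := φ₀ (A (A x)) - φ₀ (A' (A' x))) (e₁ := ψ (A (A x)) - ψ (A' (A' x)))
    (b₀ := φ₀ (A (A x))) (β := ψ (A (A x))) (α := ψ (A x)) ?_
  intro t ht
  set φt := φ₀ + t • ψ with hφt
  have hφtx : φt x = 1 := by
    simp [hφt, hφ₀x, hψx]
  have hφtA : φt (A x) = 1 + t * ψ (A x) := by
    simp [hφt, hφ₀A]
  have ha : φt (A x) ≠ 0 := by rw [hφtA]; exact ht
  obtain ⟨z, hz0, e1, e2⟩ := aux_key_eqs A A' hφtx (hmix φt x hφtx) hind ha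
  have key := aux_alg_step e1 e2
  have hψ1 : ψ (A x) - ψ (A' x) = 1 := by
    rw [← map_sub]; exact hψv
  have hd : φt (A x) - φt (A' x) = (φ₀ (A x) - φ₀ (A' x)) + t := by
    simp only [hφt, ContinuousLinearMap.add_apply, ContinuousLinearMap.smul_apply, smul_eq_mul]
    linear_combination t * hψ1
  have he : φt (A (A x)) - φt (A' (A' x)) =
      (φ₀ (A (A x)) - φ₀ (A' (A' x))) + t * (ψ (A (A x)) - ψ (A' (A' x))) := by
    simp only [hφt, ContinuousLinearMap.add_apply, ContinuousLinearMap.smul_apply, smul_eq_mul]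
    ring
  have hb : φt (A (A x)) = φ₀ (A (A x)) + t * ψ (A (A x)) := by
    simp [hφt]
  rw [hd, he, hb] at key
  exact key

lemma aux_ptwise (A A' : E →L[ℂ] E)
    (h : ∀ (x : E) (φ : E →L[ℂ] ℂ), φ x = 1 → φ (A x) = φ (A' x)) : A = A' := by
  ext y
  rcases eq_or_ne y 0 with rfl | hy
  · simp
  have hD : ∀ g : E →L[ℂ] ℂ, g (A y - A' y) = 0 := by
    intro g
    obtain ⟨φ₀, hφ₀⟩ := SeparatingDual.exists_eq_one (R := ℂ) hy
    rw [map_sub]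
    by_cases hg : g y = 0
    · have h1 := h y (φ₀ + g) (by simp [hφ₀, hg])
      have h2 := h y φ₀ hφ₀
      simp only [ContinuousLinearMap.add_apply] at h1
      linear_combination h1 - h2
    · have h1 := h y ((g y)⁻¹ • g) (by simp [inv_mul_cancel₀ hg])
      simp only [ContinuousLinearMap.smul_apply, smul_eq_mul] at h1
      have := mul_left_cancel₀ (inv_ne_zero hg) h1
      rw [this, sub_self]
  have h0 := NormedSpace.eq_zero_of_forall_dual_eq_zero ℂ hD
  exact sub_eq_zero.mp h0

/-! ### The mixed case -/

lemma aux_mixed_case [Nontrivial E] (A A' : E →L[ℂ] E)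
    (hmix : ∀ (φ : E →L[ℂ] ℂ) (x : E), φ x = 1 →
      pSpec (φ.smulRight x * A + A * φ.smulRight x) =
        pSpec (φ.smulRight x * A' + A' * φ.smulRight x)) : A = A' := by
  have hmix' : ∀ (φ : E →L[ℂ] ℂ) (x : E), φ x = 1 →
      pSpec (φ.smulRight x * A' + A' * φ.smulRight x) =
        pSpec (φ.smulRight x * A + A * φ.smulRight x) :=
    fun φ x hφ => (hmix φ x hφ).symm
  have hspan : ∀ y : E, A y - A' y ∈ Submodule.span ℂ {y} := by
    intro y
    by_cases h1 : LinearIndependent ℂ ![y, A y]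
    · exact aux_claimA A A' hmix y h1
    by_cases h2 : LinearIndependent ℂ ![y, A' y]
    · have h3 := aux_claimA A' A hmix' y h2
      have h4 := Submodule.neg_mem _ h3
      simpa using h4
    rcases eq_or_ne y 0 with rfl | hy
    · simp
    obtain ⟨p, hp⟩ := aux_dep_scalar h1 hy
    obtain ⟨q, hq⟩ := aux_dep_scalar h2 hy
    rw [hp, hq, ← sub_smul]
    exact Submodule.smul_mem _ _ (Submodule.mem_span_singleton_self y)
  obtain ⟨x₀, hx₀⟩ := exists_ne (0 : E)
  obtain ⟨l, hl⟩ := aux_exists_scalar (D := A - A')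
    (fun y => by
      obtain ⟨c, hc⟩ := Submodule.mem_span_singleton.mp (hspan y)
      exact ⟨c, by rw [ContinuousLinearMap.sub_apply, ← hc]⟩) hx₀
  have hA' : ∀ u, A' u = A u - l • u := by
    intro u
    have := hl u
    rw [ContinuousLinearMap.sub_apply] at this
    rw [← this]
    abel
  have hl0 : l = 0 := by
    by_cases hsc : ∀ y : E, ∃ p : ℂ, A y = p • y
    · obtain ⟨μ, hμ⟩ := aux_exists_scalar hsc hx₀
      obtain ⟨φ₀, hφ₀⟩ := SeparatingDual.exists_eq_one (R := ℂ) hx₀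
      have hTA : φ₀.smulRight x₀ * A + A * φ₀.smulRight x₀ = (2*μ) • φ₀.smulRight x₀ := by
        ext u
        simp only [ContinuousLinearMap.add_apply, ContinuousLinearMap.mul_apply,
          ContinuousLinearMap.smulRight_apply, ContinuousLinearMap.smul_apply, hμ, map_smul,
          smul_eq_mul]
        module
      have hTA' : φ₀.smulRight x₀ * A' + A' * φ₀.smulRight x₀ =
          (2*μ - 2*l) • φ₀.smulRight x₀ := by
        ext u
        simp only [ContinuousLinearMap.add_apply, ContinuousLinearMap.mul_apply,
          ContinuousLinearMap.smulRight_apply, ContinuousLinearMap.smul_apply, hA', hμ,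
          map_sub, map_smul, smul_eq_mul]
        module
      have hpp := hmix φ₀ x₀ hφ₀
      rw [hTA, hTA'] at hpp
      have := aux_pSpec_smul_idem_inj hφ₀ hpp
      linear_combination (1/2 : ℂ) * this
    · push_neg at hsc
      obtain ⟨y, hyp⟩ := hsc
      have hy0 : y ≠ 0 := by
        rintro rfl
        exact hyp 0 (by simp)
      have hind : LinearIndependent ℂ ![y, A y] := by
        rw [linearIndependent_fin2]
        constructor
        · simp only [Matrix.cons_val_one, Matrix.head_cons]
          intro h0
          exact hyp 0 (by simpa using h0)
        · intro a ha
          simp only [Matrix.cons_val_one, Matrix.head_cons, Matrix.cons_val_zero] at ha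
          have ha0 : a ≠ 0 := by
            rintro rfl
            rw [zero_smul] at ha
            exact hy0 ha.symm
          have h5 : a⁻¹ • (a • A y) = A y := by
            rw [smul_smul, inv_mul_cancel₀ ha0, one_smul]
          rw [ha] at h5
          exact hyp a⁻¹ h5.symm
      obtain ⟨φ2, ψA, hφ2x, hφ2A, hψAx, hψAA⟩ := aux_exists_dual_pair hind
      set φ := φ2 + ψA with hφd
      have hφy : φ y = 1 := by simp [hφd, hφ2x, hψAx]
      have hφA : φ (A y) = 1 := by simp [hφd, hφ2A, hψAA]
      obtain ⟨z, hz0, e1, e2⟩ := aux_key_eqs A A' hφy (hmix φ y hφy) hind (by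
        rw [hφA]; exact one_ne_zero)
      have hφA' : φ (A' y) = 1 - l := by
        rw [hA' y, map_sub, map_smul, smul_eq_mul, hφA, hφy, mul_one]
      have hφA'2 : φ (A' (A' y)) = φ (A (A y)) - 2*l + l^2 := by
        rw [hA' (A' y), hA' y]
        simp only [map_sub, map_smul, smul_eq_mul, hφA, hφy]
        ring
      rw [hφA] at e1
      rw [hφA', hφA'2] at e2
      have h2lz : 2 * l * z = 0 := by linear_combination e2 - e1
      rcases mul_eq_zero.mp h2lz with h | h
      · rcases mul_eq_zero.mp h with h' | h'
        · exact absurd h' two_ne_zero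
        · exact h'
      · exact absurd h hz0
  ext u
  have := hl u
  rw [ContinuousLinearMap.sub_apply, hl0, zero_smul, sub_eq_zero] at this
  exact this

end Aux

/-- Lemma 3.3: if `(r,s) ≠ (0,0)` and the peripheral spectra of
`Bʳ A Bˢ + Bˢ A Bʳ` and `Bʳ A' Bˢ + Bˢ A' Bʳ` coincide for every rank-one idempotent
`B`, then `A = A'`. -/
theorem eq_of_pSpec_eq_on_rankOneIdem
    {X : Type*} [NormedAddCommGroup X] [NormedSpace ℂ X] [CompleteSpace X]
    (r s : ℕ) (hrs : ¬(r = 0 ∧ s = 0)) (A A' : X →L[ℂ] X)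
    (h : ∀ B ∈ rankOneIdem X,
      pSpec (B ^ r * A * B ^ s + B ^ s * A * B ^ r) =
        pSpec (B ^ r * A' * B ^ s + B ^ s * A' * B ^ r)) :
    A = A' := by
  rcases subsingleton_or_nontrivial X with hX | hX
  · ext u
    exact Subsingleton.elim _ _
  rcases eq_or_ne r 0 with rfl | hr
  · -- r = 0, s ≠ 0: mixed case
    have hs : s ≠ 0 := fun h0 => hrs ⟨rfl, h0⟩
    apply aux_mixed_case A A'
    intro φ x hφ
    have hB : φ.smulRight x ∈ rankOneIdem X := ⟨φ, x, hφ, rfl⟩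
    have := h (φ.smulRight x) hB
    rw [pow_zero, aux_pow_idem hφ hs, one_mul, mul_one, mul_one, one_mul] at this
    rw [add_comm (A * φ.smulRight x), add_comm (A' * φ.smulRight x)] at this
    exact this
  rcases eq_or_ne s 0 with rfl | hs
  · -- s = 0, r ≠ 0: mixed case
    apply aux_mixed_case A A'
    intro φ x hφ
    have hB : φ.smulRight x ∈ rankOneIdem X := ⟨φ, x, hφ, rfl⟩
    have := h (φ.smulRight x) hB
    rw [pow_zero, aux_pow_idem hφ hr, one_mul, mul_one, mul_one, one_mul] at this
    exact this
  · -- r ≠ 0, s ≠ 0: easy case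
    apply aux_ptwise A A'
    intro x φ hφ
    have hB : φ.smulRight x ∈ rankOneIdem X := ⟨φ, x, hφ, rfl⟩
    have hBAB : ∀ T : X →L[ℂ] X, φ.smulRight x * T * φ.smulRight x =
        φ (T x) • φ.smulRight x := by
      intro T
      ext y
      simp [ContinuousLinearMap.mul_apply, hφ, map_smul, smul_smul, mul_comm]
    have hsum : ∀ T : X →L[ℂ] X, φ.smulRight x ^ r * T * φ.smulRight x ^ s +
        φ.smulRight x ^ s * T * φ.smulRight x ^ r = (2 * φ (T x)) • φ.smulRight x := by
      intro T
      rw [aux_pow_idem hφ hr, aux_pow_idem hφ hs, hBAB T, ← add_smul]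
      ring_nf
    have := h (φ.smulRight x) hB
    rw [hsum A, hsum A'] at this
    have h2 := aux_pSpec_smul_idem_inj hφ this
    have := mul_left_cancel₀ (two_ne_zero (α := ℂ)) h2
    exact this
end
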